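/- arXiv:2006.01695 — 3 statements merged into one kernel-verified Lean document; each statement's English description precedes it below -/
import Mathlib

section
/- For the left-degenerate unlabeled binary tree t_n with n >= 2 leaves (defined by t_1 = a, t_n = a(t_{n-1}, a)), and any k >= 1, the k-th order label-shape entropy satisfies H_k(t_n) = log2(n) + (n-1)*log2(n/(n-1)) <= log2(n) + log2(e). -/
/-- Labeled binary trees: every node has 0 or 2 children. -/
inductive LBT (σ : Type) where
  | leaf (a : σ) : LBT σ
  | node (a : σ) (l r : LBT σ) : LBT σ

/-- List of (history, label, degree) triples of a binary tree, one per node.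
The history records alternately labels and direction bits (`false` = left). -/
def ldata {σ} (hist : List (σ × Bool)) : LBT σ → List (List (σ × Bool) × σ × ℕ)
  | .leaf a => [(hist, a, 0)]
  | .node a l r =>
      (hist, a, 2) :: (ldata (hist ++ [(a, false)]) l ++ ldata (hist ++ [(a, true)]) r)

/-- Last `k` entries of a list. -/
def lastN {α} (k : ℕ) (l : List α) : List α := l.drop (l.length - k)

/-- Generic empirical entropy in per-node form: for each node `e` of `D` we add
`log2 (#{e' | cond e' = cond e} / #{e' | cond e' = cond e ∧ val e' = val e})`.
Grouping nodes by the pair `(cond, val)` recovers the usual form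
`∑_z ∑_w m_{z,w} log2 (m_z / m_{z,w})`. -/
noncomputable def entropySum {α β γ : Type*} [DecidableEq β] [DecidableEq γ]
    (D : List α) (cond : α → β) (val : α → γ) : ℝ :=
  (D.map (fun e => Real.logb 2
    ((D.countP (fun e' => decide (cond e' = cond e)) : ℝ) /
     (D.countP (fun e' => decide (cond e' = cond e ∧ val e' = val e)) : ℝ)))).sum

/-- `k`-history of a node given its full history: the last `k` entries after
padding on the left with `(box, false)`. -/
def kHist {σ} (box : σ) (k : ℕ) (h : List (σ × Bool)) : List (σ × Bool) :=
  lastN k (List.replicate k (box, false) ++ h)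

/-- `k`-label-history given the list of ancestor labels (padded with `box`). -/
def kLabHist {σ} (box : σ) (k : ℕ) (h : List σ) : List σ :=
  lastN k (List.replicate k box ++ h)

/-- `k`-th order label-shape entropy of a labeled binary tree. -/
noncomputable def Hls {σ} [DecidableEq σ] (box : σ) (k : ℕ) (t : LBT σ) : ℝ :=
  entropySum (ldata [] t) (fun e => kHist box k e.1) (fun e => e.2)

/-- The left-degenerate unlabeled binary tree with `n` leaves:
`t 1 = a`, `t (n+1) = a(t n, a)`.  (The label alphabet is `Unit`.) -/
def ldeg : ℕ → LBT Unit
  | 0 => .leaf ()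
  | 1 => .leaf ()
  | n + 1 => .node () (ldeg n) (.leaf ())

-- auxiliary
lemma countP_replicate {α} (p : α → Bool) (n : ℕ) (a : α) :
    List.countP p (List.replicate n a) = if p a then n else 0 := by
  induction n with
  | zero => simp
  | succ m ih => simp only [List.replicate_succ, List.countP_cons, ih]; split <;> simp [*]

lemma entropySum_map {α β γ : Type*} [DecidableEq β] [DecidableEq γ]
    (D : List α) (cond : α → β) (val : α → γ) :
    entropySum D cond val
      = entropySum (D.map (fun e => (cond e, val e))) Prod.fst Prod.snd := by
  simp only [entropySum, List.map_map, List.countP_map, Function.comp_def]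

abbrev f0 : Unit × Bool := ((), false)
abbrev t0 : Unit × Bool := ((), true)

lemma kHist_rep (k d : ℕ) : kHist () k (List.replicate d f0) = List.replicate k f0 := by
  simp [kHist, lastN, ← List.replicate_add, List.drop_replicate]

lemma kHist_rep_t (k d : ℕ) (hk : 1 ≤ k) :
    kHist () k (List.replicate d f0 ++ [t0])
      = List.replicate (k-1) f0 ++ [t0] := by
  simp only [kHist, lastN, ← List.append_assoc, ← List.replicate_add]
  rw [List.drop_append, List.drop_replicate]
  simp only [List.length_append, List.length_replicate, List.length_cons, List.length_nil]
  have e1 : k + d - (k + d + (0 + 1) - k) = k - 1 := by omega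
  have e2 : k + d + (0 + 1) - k - (k + d) = 0 := by omega
  rw [e1, e2]; rfl

lemma z0_ne_z1 (k : ℕ) (hk : 1 ≤ k) :
    (List.replicate k f0 : List (Unit × Bool)) ≠ List.replicate (k-1) f0 ++ [t0] := by
  intro h
  have : t0 ∈ List.replicate k f0 := h ▸ (by simp)
  simp [List.mem_replicate] at this

lemma ldata_map (k : ℕ) (hk : 1 ≤ k) :
    ∀ n, 1 ≤ n → ∀ d,
    (ldata (List.replicate d f0) (ldeg n)).map
        (fun e => (kHist () k e.1, e.2))
      = List.replicate (n-1) (List.replicate k f0, (), 2)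
        ++ (List.replicate k f0, (), 0)
          :: List.replicate (n-1) (List.replicate (k-1) f0 ++ [t0], (), 0) := by
  intro n
  induction n with
  | zero => omega
  | succ m ih =>
    intro _ d
    rcases Nat.eq_zero_or_pos m with hm | hm
    · subst hm
      simp [ldeg, ldata, kHist_rep k d]
    · obtain ⟨m', rfl⟩ : ∃ m', m = m' + 1 := ⟨m - 1, by omega⟩
      show (ldata _ (LBT.node () (ldeg (m'+1)) (.leaf ()))).map _ = _
      have hrep : List.replicate d f0 ++ [((), false)] = List.replicate (d+1) f0 := by
        simp [List.replicate_succ']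
      rw [ldata]
      simp only [List.map_cons, List.map_append, hrep, ih hm (d+1)]
      simp only [ldata, List.map_cons, List.map_nil, kHist_rep k d,
        kHist_rep_t k d hk]
      simp only [Nat.add_sub_cancel]
      conv_rhs => rw [List.replicate_succ,
        List.replicate_succ' (n := m') (a := (List.replicate (k-1) f0 ++ [t0], ((), 0)))]
      simp [List.append_assoc]

/-- For the left-degenerate binary tree with `n ≥ 2` leaves and any `k ≥ 1`,
`H_k(t_n) = log2 n + (n-1) log2 (n/(n-1)) ≤ log2 n + log2 e`. -/
theorem Hls_ldeg (n k : ℕ) (hn : 2 ≤ n) (hk : 1 ≤ k) :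
    Hls () k (ldeg n) =
      Real.logb 2 n + ((n : ℝ) - 1) * Real.logb 2 ((n : ℝ) / ((n : ℝ) - 1)) ∧
    Hls () k (ldeg n) ≤ Real.logb 2 n + Real.logb 2 (Real.exp 1) := by
  set z0 : List (Unit × Bool) := List.replicate k f0 with hz0
  set z1 : List (Unit × Bool) := List.replicate (k-1) f0 ++ [t0] with hz1
  have hne : z0 ≠ z1 := z0_ne_z1 k hk
  have key : Hls () k (ldeg n)
      = Real.logb 2 n + ((n : ℝ) - 1) * Real.logb 2 ((n : ℝ) / ((n : ℝ) - 1)) := by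
    rw [Hls, entropySum_map]
    have h0 : ([] : List (Unit × Bool)) = List.replicate 0 f0 := rfl
    rw [h0, ldata_map k hk n (by omega) 0]
    rw [entropySum]
    simp only [List.map_append, List.map_replicate, List.map_cons,
      List.countP_append, List.countP_cons, countP_replicate,
      List.sum_append, List.sum_cons, List.sum_replicate]
    -- evaluate the decide's
    simp only [decide_eq_true_eq]
    norm_num [z0_ne_z1 k hk, Ne.symm (z0_ne_z1 k hk)]
    have hN : ((n - 1 : ℕ) : ℝ) = (n : ℝ) - 1 := by
      push_cast [Nat.cast_sub (by omega : 1 ≤ n)]; ring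
    rw [hN]
    have h1 : (n:ℝ) - 1 + 1 = (n:ℝ) := by ring
    have hx : (n:ℝ) - 1 ≠ 0 := by
      have : (2:ℝ) ≤ (n:ℝ) := by exact_mod_cast hn
      linarith
    rw [h1, div_self hx, Real.logb_one]
    ring
  refine ⟨key, ?_⟩
  rw [key]
  have h2 : (1:ℝ) < 2 := one_lt_two
  have hx : (1:ℝ) ≤ (n:ℝ) - 1 := by
    have : (2:ℝ) ≤ n := by exact_mod_cast hn
    linarith
  have hxpos : (0:ℝ) < (n:ℝ) - 1 := by linarith
  have hlog : Real.log ((n:ℝ) / ((n:ℝ)-1)) ≤ 1 / ((n:ℝ)-1) := by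
    have := Real.log_le_sub_one_of_pos (x := (n:ℝ)/((n:ℝ)-1)) (by positivity)
    have heq : (n:ℝ)/((n:ℝ)-1) - 1 = 1/((n:ℝ)-1) := by field_simp; ring
    linarith [heq ▸ this]
  have hmul : ((n:ℝ)-1) * Real.log ((n:ℝ)/((n:ℝ)-1)) ≤ 1 := by
    calc ((n:ℝ)-1) * Real.log ((n:ℝ)/((n:ℝ)-1)) ≤ ((n:ℝ)-1) * (1/((n:ℝ)-1)) := by
          exact mul_le_mul_of_nonneg_left hlog (by linarith)
      _ = 1 := by field_simp
  have : ((n:ℝ)-1) * Real.logb 2 ((n:ℝ)/((n:ℝ)-1)) ≤ Real.logb 2 (Real.exp 1) := by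
    rw [Real.logb, Real.logb, Real.log_exp]
    rw [mul_div_assoc']
    have hl2 : (0:ℝ) < Real.log 2 := Real.log_pos h2
    gcongr
  linarith
end

section
/- For every labeled binary tree t and every k >= 0, the k-th order label-shape entropy satisfies H_k(t) <= H^ell_k(t) + H^{ell,deg}_k(t). -/
/-- `k`-th order label entropy of a labeled binary tree. -/
noncomputable def HlB {σ} [DecidableEq σ] (box : σ) (k : ℕ) (t : LBT σ) : ℝ :=
  entropySum (ldata [] t) (fun e => kLabHist box k (e.1.map Prod.fst)) (fun e => e.2.1)

/-- `k`-th order label-degree entropy of a labeled binary tree. -/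
noncomputable def HldB {σ} [DecidableEq σ] (box : σ) (k : ℕ) (t : LBT σ) : ℝ :=
  entropySum (ldata [] t)
    (fun e => (kLabHist box k (e.1.map Prod.fst), e.2.1)) (fun e => e.2.2)

/-- `k`-th order degree-label entropy of a labeled binary tree. -/
noncomputable def HdlB {σ} [DecidableEq σ] (box : σ) (k : ℕ) (t : LBT σ) : ℝ :=
  entropySum (ldata [] t)
    (fun e => (kLabHist box k (e.1.map Prod.fst), e.2.2)) (fun e => e.2.1)

/-- Degree entropy of a labeled binary tree: `∑_i n_i log2(|t|/n_i)`. -/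
noncomputable def HdegB {σ} [DecidableEq σ] (t : LBT σ) : ℝ :=
  entropySum (ldata [] t) (fun _ => ()) (fun e => e.2.2)


open Real Finset

section Aux

variable {α : Type*} {β : Type*} {β' : Type*} {γ : Type*} {δ : Type*}

lemma sum_count_toFinset [DecidableEq β] (l : List β) :
    ∑ b ∈ l.toFinset, l.count b = l.length := by
  have := Finset.sum_list_map_count l (fun _ => (1 : ℕ))
  simpa using this.symm

lemma count_eq_countP' [DecidableEq β] (l : List β) (b : β) :
    l.count b = l.countP (fun x => decide (x = b)) := by
  rw [List.count_eq_countP]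
  apply List.countP_congr; intro x _; simp

lemma sum_countP_toFinset [DecidableEq β] (l : List β) :
    ∑ b ∈ l.toFinset, l.countP (fun x => decide (x = b)) = l.length := by
  rw [← sum_count_toFinset l]
  exact Finset.sum_congr rfl (fun b _ => (count_eq_countP' l b).symm)

lemma countP_eq_sum_count [DecidableEq β] (l : List β) (Q : β → Prop) [DecidablePred Q] :
    l.countP (fun b => decide (Q b)) = ∑ b ∈ l.toFinset.filter Q, l.countP (fun x => decide (x = b)) := by
  rw [List.countP_eq_length_filter, ← sum_count_toFinset (l.filter (fun b => decide (Q b)))]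
  rw [List.toFinset_filter]
  have hset : l.toFinset.filter (fun x => (decide (Q x)) = true) = l.toFinset.filter Q := by
    apply Finset.filter_congr
    intro x _
    simp
  rw [hset]
  refine Finset.sum_congr rfl (fun b hb => ?_)
  have hQ : decide (Q b) = true := by
    simp only [Finset.mem_filter] at hb
    simpa using hb.2
  rw [List.count_filter (p := fun x => decide (Q x)) (a := b) hQ]
  exact count_eq_countP' l b

lemma countP_comp_key [DecidableEq β] (D : List α) (k : α → β) (Q : β → Prop) [DecidablePred Q] :
    D.countP (fun e => decide (Q (k e))) =
      ∑ b ∈ (D.map k).toFinset.filter Q, D.countP (fun e => decide (k e = b)) := by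
  have h1 : D.countP (fun e => decide (Q (k e))) = (D.map k).countP (fun b => decide (Q b)) := by
    rw [List.countP_map]; rfl
  rw [h1, countP_eq_sum_count]
  refine Finset.sum_congr rfl (fun b _ => ?_)
  rw [List.countP_map]; rfl

lemma entropySum_eq [DecidableEq β] [DecidableEq γ] (D : List α) (c : α → β) (v : α → γ) :
    entropySum D c v = ∑ p ∈ (D.map (fun e => (c e, v e))).toFinset,
      (D.countP (fun e => decide ((c e, v e) = p)) : ℝ) *
        Real.logb 2 ((D.countP (fun e => decide (c e = p.1)) : ℝ) /
          (D.countP (fun e => decide ((c e, v e) = p)) : ℝ)) := by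
  unfold entropySum
  have hmap : D.map (fun e => Real.logb 2
      ((D.countP (fun e' => decide (c e' = c e)) : ℝ) /
       (D.countP (fun e' => decide (c e' = c e ∧ v e' = v e)) : ℝ))) =
      (D.map (fun e => (c e, v e))).map (fun p => Real.logb 2
        ((D.countP (fun e' => decide (c e' = p.1)) : ℝ) /
         (D.countP (fun e' => decide ((c e', v e') = p)) : ℝ))) := by
    rw [List.map_map]
    apply List.map_congr_left
    intro e _
    have : D.countP (fun e' => decide (c e' = c e ∧ v e' = v e)) =
        D.countP (fun e' => decide ((c e', v e') = (c e, v e))) := by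
      apply List.countP_congr; intro x _; simp [Prod.ext_iff]
    simp only [Function.comp]
    rw [this]
  rw [hmap, Finset.sum_list_map_count]
  refine Finset.sum_congr rfl (fun p hp => ?_)
  rw [count_eq_countP']
  have : (D.map (fun e => (c e, v e))).countP (fun x => decide (x = p)) =
      D.countP (fun e => decide ((c e, v e) = p)) := by
    rw [List.countP_map]; rfl
  rw [this, nsmul_eq_mul]

end Aux
section Main

variable {α : Type*} {β : Type*} {β' : Type*} {γ : Type*} {δ : Type*}

lemma entropySum_comp_le [DecidableEq β] [DecidableEq β'] [DecidableEq γ]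
    (D : List α) (z : α → β) (v : α → γ) (f : β → β') :
    entropySum D z v ≤ entropySum D (fun e => f (z e)) v := by
  classical
  set mz : β → ℝ := fun b => (D.countP (fun e => decide (z e = b)) : ℝ) with hmz
  set mzv : β × γ → ℝ := fun p => (D.countP (fun e => decide ((z e, v e) = p)) : ℝ) with hmzv
  set nw : β' → ℝ := fun w => (D.countP (fun e => decide (f (z e) = w)) : ℝ) with hnw
  set nwv : β' × γ → ℝ := fun q => (D.countP (fun e => decide ((f (z e), v e) = q)) : ℝ) with hnwv
  set S := (D.map (fun e => (z e, v e))).toFinset with hS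
  set T := (D.map (fun e => (f (z e), v e))).toFinset with hT
  set U := (D.map z).toFinset with hU
  -- membership facts
  have hSmem : ∀ p ∈ S, ∃ e ∈ D, (z e, v e) = p := by
    intro p hp
    simpa [hS, List.mem_map] using List.mem_toFinset.mp hp
  have hTmem : ∀ q ∈ T, ∃ e ∈ D, (f (z e), v e) = q := by
    intro q hq
    simpa [hT, List.mem_map] using List.mem_toFinset.mp hq
  -- positivity
  have cpos : ∀ (P : α → Prop) [DecidablePred P], (∃ e ∈ D, P e) →
      (0:ℝ) < (D.countP (fun e => decide (P e)) : ℝ) := by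
    intro P _ hP
    have : 0 < D.countP (fun e => decide (P e)) := by
      rw [List.countP_pos_iff]
      obtain ⟨e, he, hPe⟩ := hP
      exact ⟨e, he, by simpa using hPe⟩
    exact_mod_cast this
  have hmzv_pos : ∀ p ∈ S, 0 < mzv p := by
    intro p hp
    obtain ⟨e, he, hep⟩ := hSmem p hp
    exact cpos _ ⟨e, he, hep⟩
  have hmz_pos : ∀ p ∈ S, 0 < mz p.1 := by
    intro p hp
    obtain ⟨e, he, hep⟩ := hSmem p hp
    exact cpos _ ⟨e, he, by rw [← hep]⟩
  have hnw_posS : ∀ p ∈ S, 0 < nw (f p.1) := by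
    intro p hp
    obtain ⟨e, he, hep⟩ := hSmem p hp
    exact cpos _ ⟨e, he, by rw [← hep]⟩
  have hnwv_posS : ∀ p ∈ S, 0 < nwv (f p.1, p.2) := by
    intro p hp
    obtain ⟨e, he, hep⟩ := hSmem p hp
    exact cpos _ ⟨e, he, by rw [← hep]⟩
  have hnw_posT : ∀ q ∈ T, 0 < nw q.1 := by
    intro q hq
    obtain ⟨e, he, heq⟩ := hTmem q hq
    exact cpos _ ⟨e, he, by rw [← heq]⟩
  -- nonnegativity of counts
  have mz_nonneg : ∀ b, 0 ≤ mz b := fun b => Nat.cast_nonneg _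
  have nwv_nonneg : ∀ q, 0 ≤ nwv q := fun q => Nat.cast_nonneg _
  have nw_nonneg : ∀ w, 0 ≤ nw w := fun w => Nat.cast_nonneg _
  have mzv_nonneg : ∀ p, 0 ≤ mzv p := fun p => Nat.cast_nonneg _
  -- partition identities
  have hnwv_split : ∀ q : β' × γ, nwv q = ∑ p ∈ S.filter (fun p => (f p.1, p.2) = q), mzv p := by
    intro q
    have := countP_comp_key D (fun e => (z e, v e)) (fun p : β × γ => (f p.1, p.2) = q)
    have h1 : D.countP (fun e => decide ((f (z e), v e) = q)) =
        D.countP (fun e => decide ((f (z e, v e).1, (z e, v e).2) = q)) := rfl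
    rw [hnwv]
    simp only [h1]
    rw [this]
    push_cast
    rfl
  have hnw_split : ∀ w : β', nw w = ∑ b ∈ U.filter (fun b => f b = w), mz b := by
    intro w
    have := countP_comp_key D z (fun b : β => f b = w)
    rw [hnw]
    simp only
    rw [this]
    push_cast
    rfl
  have htotS : ∑ p ∈ S, mzv p = (D.length : ℝ) := by
    have h := sum_countP_toFinset (D.map (fun e => (z e, v e)))
    have h2 : ∑ p ∈ S, D.countP (fun e => decide ((z e, v e) = p)) = D.length := by
      calc ∑ p ∈ S, D.countP (fun e => decide ((z e, v e) = p))
          = ∑ p ∈ S, (D.map (fun e => (z e, v e))).countP (fun x => decide (x = p)) :=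
            Finset.sum_congr rfl (fun p _ => by rw [List.countP_map]; rfl)
        _ = (D.map (fun e => (z e, v e))).length := h
        _ = D.length := List.length_map _
    rw [hmzv, ← Nat.cast_sum]
    exact_mod_cast h2
  have htotT : ∑ q ∈ T, nwv q = (D.length : ℝ) := by
    have h := sum_countP_toFinset (D.map (fun e => (f (z e), v e)))
    have h2 : ∑ q ∈ T, D.countP (fun e => decide ((f (z e), v e) = q)) = D.length := by
      calc ∑ q ∈ T, D.countP (fun e => decide ((f (z e), v e) = q))
          = ∑ q ∈ T, (D.map (fun e => (f (z e), v e))).countP (fun x => decide (x = q)) :=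
            Finset.sum_congr rfl (fun q _ => by rw [List.countP_map]; rfl)
        _ = (D.map (fun e => (f (z e), v e))).length := h
        _ = D.length := List.length_map _
    rw [hnwv, ← Nat.cast_sum]
    exact_mod_cast h2
  -- rewrite both sides
  rw [entropySum_eq D z v, entropySum_eq D (fun e => f (z e)) v]
  show ∑ p ∈ S, mzv p * Real.logb 2 (mz p.1 / mzv p) ≤
      ∑ q ∈ T, nwv q * Real.logb 2 (nw q.1 / nwv q)
  -- Step A : RHS as sum over S
  have hmaps : ∀ p ∈ S, (f p.1, p.2) ∈ T := by
    intro p hp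
    obtain ⟨e, he, hep⟩ := hSmem p hp
    rw [hT]
    apply List.mem_toFinset.mpr
    rw [List.mem_map]
    exact ⟨e, he, by rw [← hep]⟩
  have hRHS : ∑ q ∈ T, nwv q * Real.logb 2 (nw q.1 / nwv q) =
      ∑ p ∈ S, mzv p * Real.logb 2 (nw (f p.1) / nwv (f p.1, p.2)) := by
    rw [← Finset.sum_fiberwise_of_maps_to hmaps
      (fun p => mzv p * Real.logb 2 (nw (f p.1) / nwv (f p.1, p.2)))]
    refine Finset.sum_congr rfl (fun q hq => ?_)
    have hinner : ∑ p ∈ S.filter (fun p => (f p.1, p.2) = q),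
        mzv p * Real.logb 2 (nw (f p.1) / nwv (f p.1, p.2)) =
        ∑ p ∈ S.filter (fun p => (f p.1, p.2) = q), mzv p * Real.logb 2 (nw q.1 / nwv q) := by
      refine Finset.sum_congr rfl (fun p hp => ?_)
      have hpq : (f p.1, p.2) = q := (Finset.mem_filter.mp hp).2
      rw [hpq, show f p.1 = q.1 from congrArg Prod.fst hpq]
    rw [hinner, ← Finset.sum_mul, ← hnwv_split q]
  rw [hRHS]
  -- Step C : key counting inequality
  have hUmem : ∀ p ∈ S, p.1 ∈ U := by
    intro p hp
    obtain ⟨e, he, hep⟩ := hSmem p hp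
    rw [hU]
    apply List.mem_toFinset.mpr
    rw [List.mem_map]
    exact ⟨e, he, by rw [← hep]⟩
  have h25 : (0:ℝ) < Real.log 2 := Real.log_pos (by norm_num)
  have keyC : ∑ p ∈ S, mz p.1 * nwv (f p.1, p.2) / nw (f p.1) ≤ (D.length : ℝ) := by
    have hinj : ∀ p ∈ S, ∀ p' ∈ S,
        (fun p : β × γ => (p.1, (f p.1, p.2))) p = (fun p : β × γ => (p.1, (f p.1, p.2))) p' →
        p = p' := by
      intro p _ p' _ h
      simp only [Prod.mk.injEq] at h
      exact Prod.ext h.1 h.2.2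
    calc ∑ p ∈ S, mz p.1 * nwv (f p.1, p.2) / nw (f p.1)
        = ∑ r ∈ S.image (fun p : β × γ => (p.1, (f p.1, p.2))),
            mz r.1 * nwv r.2 / nw r.2.1 :=
              (Finset.sum_image (f := fun r : β × (β' × γ) => mz r.1 * nwv r.2 / nw r.2.1)
                hinj).symm
      _ ≤ ∑ r ∈ (U ×ˢ T).filter (fun r => f r.1 = r.2.1), mz r.1 * nwv r.2 / nw r.2.1 := by
          apply Finset.sum_le_sum_of_subset_of_nonneg
          · intro r hr
            obtain ⟨p, hp, hpr⟩ := Finset.mem_image.mp hr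
            rw [← hpr]
            refine Finset.mem_filter.mpr ⟨Finset.mem_product.mpr ⟨hUmem p hp, hmaps p hp⟩, rfl⟩
          · intro r _ _
            apply div_nonneg (mul_nonneg (mz_nonneg _) (nwv_nonneg _)) (nw_nonneg _)
      _ = ∑ q ∈ T, ∑ b ∈ U, if f b = q.1 then mz b * nwv q / nw q.1 else 0 := by
          rw [Finset.sum_filter, Finset.sum_product_right]
      _ = ∑ q ∈ T, nwv q := by
          refine Finset.sum_congr rfl (fun q hq => ?_)
          rw [← Finset.sum_filter]
          simp only [mul_div_assoc]
          rw [← Finset.sum_mul, ← hnw_split q.1, mul_comm,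
            div_mul_cancel₀ _ (hnw_posT q hq).ne']
      _ = (D.length : ℝ) := htotT
  -- Step B : log-sum argument
  rw [← sub_nonpos, ← Finset.sum_sub_distrib]
  have hstep : ∀ p ∈ S,
      mzv p * Real.logb 2 (mz p.1 / mzv p) - mzv p * Real.logb 2 (nw (f p.1) / nwv (f p.1, p.2))
      ≤ (mz p.1 * nwv (f p.1, p.2) / nw (f p.1) - mzv p) / Real.log 2 := by
    intro p hp
    have h1 := hmzv_pos p hp
    have h2 := hmz_pos p hp
    have h3 := hnw_posS p hp
    have h4 := hnwv_posS p hp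
    rw [← mul_sub]
    have hcomb : Real.logb 2 (mz p.1 / mzv p) - Real.logb 2 (nw (f p.1) / nwv (f p.1, p.2)) =
        Real.logb 2 ((mz p.1 * nwv (f p.1, p.2)) / (mzv p * nw (f p.1))) := by
      rw [Real.logb, Real.logb, Real.logb]
      rw [Real.log_div (by positivity) (by positivity),
          Real.log_div (by positivity) (by positivity),
          Real.log_div (by positivity) (by positivity),
          Real.log_mul (by positivity) (by positivity),
          Real.log_mul (by positivity) (by positivity)]
      ring
    rw [hcomb, Real.logb, mul_div_assoc']
    rw [div_le_div_iff_of_pos_right h25]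
    have hr : (0:ℝ) < (mz p.1 * nwv (f p.1, p.2)) / (mzv p * nw (f p.1)) := by positivity
    have hlog := Real.log_le_sub_one_of_pos hr
    have hmul : mzv p * Real.log ((mz p.1 * nwv (f p.1, p.2)) / (mzv p * nw (f p.1)))
        ≤ mzv p * ((mz p.1 * nwv (f p.1, p.2)) / (mzv p * nw (f p.1)) - 1) :=
      mul_le_mul_of_nonneg_left hlog h1.le
    refine le_trans hmul (le_of_eq ?_)
    field_simp
  refine le_trans (Finset.sum_le_sum hstep) ?_
  rw [← Finset.sum_div]
  apply div_nonpos_of_nonpos_of_nonneg _ h25.le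
  rw [Finset.sum_sub_distrib, htotS]
  linarith [keyC]

end Main
section Chain

variable {α : Type*} {β : Type*} {γ : Type*} {δ : Type*}

lemma entropySum_chain [DecidableEq β] [DecidableEq γ] [DecidableEq δ]
    (D : List α) (c : α → β) (v1 : α → γ) (v2 : α → δ) :
    entropySum D c (fun e => (v1 e, v2 e)) =
      entropySum D c v1 + entropySum D (fun e => (c e, v1 e)) v2 := by
  unfold entropySum
  rw [← List.sum_map_add]
  apply congrArg List.sum
  apply List.map_congr_left
  intro e he
  have e1 : D.countP (fun e' => decide (c e' = c e ∧
        (fun e => (v1 e, v2 e)) e' = (fun e => (v1 e, v2 e)) e)) =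
      D.countP (fun e' => decide (c e' = c e ∧ v1 e' = v1 e ∧ v2 e' = v2 e)) := by
    apply List.countP_congr; intro x _; simp [Prod.ext_iff, and_assoc]
  have e2 : D.countP (fun e' => decide ((fun e => (c e, v1 e)) e' = (fun e => (c e, v1 e)) e)) =
      D.countP (fun e' => decide (c e' = c e ∧ v1 e' = v1 e)) := by
    apply List.countP_congr; intro x _; simp [Prod.ext_iff]
  have e3 : D.countP (fun e' => decide ((fun e => (c e, v1 e)) e' = (fun e => (c e, v1 e)) e ∧
        v2 e' = v2 e)) =
      D.countP (fun e' => decide (c e' = c e ∧ v1 e' = v1 e ∧ v2 e' = v2 e)) := by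
    apply List.countP_congr; intro x _; simp [Prod.ext_iff, and_assoc]
  rw [e1, e2, e3]
  have hA : (0:ℝ) < (D.countP (fun e' => decide (c e' = c e)) : ℝ) := by
    have : 0 < D.countP (fun e' => decide (c e' = c e)) :=
      List.countP_pos_iff.mpr ⟨e, he, by simp⟩
    exact_mod_cast this
  have hB : (0:ℝ) < (D.countP (fun e' => decide (c e' = c e ∧ v1 e' = v1 e)) : ℝ) := by
    have : 0 < D.countP (fun e' => decide (c e' = c e ∧ v1 e' = v1 e)) :=
      List.countP_pos_iff.mpr ⟨e, he, by simp⟩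
    exact_mod_cast this
  have hC : (0:ℝ) < (D.countP (fun e' => decide (c e' = c e ∧ v1 e' = v1 e ∧ v2 e' = v2 e)) : ℝ) := by
    have : 0 < D.countP (fun e' => decide (c e' = c e ∧ v1 e' = v1 e ∧ v2 e' = v2 e)) :=
      List.countP_pos_iff.mpr ⟨e, he, by simp⟩
    exact_mod_cast this
  rw [Real.logb_div hA.ne' hC.ne', Real.logb_div hA.ne' hB.ne', Real.logb_div hB.ne' hC.ne']
  ring

end Chain

/-- For every labeled binary tree `t` and every `k ≥ 0`,
`H_k(t) ≤ H^ℓ_k(t) + H^{ℓ,deg}_k(t)`. -/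
theorem Hls_le_HlB_add_HldB {σ : Type} [DecidableEq σ] (box : σ) (k : ℕ) (t : LBT σ) :
    Hls box k t ≤ HlB box k t + HldB box k t := by
  classical
  have hcomm : ∀ h : List (σ × Bool), kLabHist box k (h.map Prod.fst) =
      (kHist box k h).map Prod.fst := by
    intro h
    unfold kLabHist kHist lastN
    rw [List.map_drop, List.map_append, List.map_replicate]
    congr 2
    simp
  unfold Hls HlB HldB
  simp only [hcomm]
  rw [← entropySum_chain (ldata [] t) (fun e => (kHist box k e.1).map Prod.fst)
    (fun e => e.2.1) (fun e => e.2.2)]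
  have hval : (fun e : List (σ × Bool) × σ × ℕ => (e.2.1, e.2.2)) = (fun e => e.2) :=
    funext fun e => rfl
  rw [hval]
  exact entropySum_comp_le (ldata [] t) (fun e => kHist box k e.1) (fun e => e.2)
    (List.map Prod.fst)
end

section
/- For every labeled binary tree t and every k >= 0, the k-th order label-shape entropy satisfies H_k(t) <= H^deg(t) + H^{deg,ell}_k(t). -/
open Real Finset

lemma listSum_map_add {α : Type*} (l : List α) (f g : α → ℝ) :
    (l.map fun e => f e + g e).sum = (l.map f).sum + (l.map g).sum := by
  induction l with
  | nil => simp
  | cons a l ih => simp [ih]; ring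

lemma entropy_chain {α β γ1 γ2 : Type*} [DecidableEq β] [DecidableEq γ1] [DecidableEq γ2]
    (D : List α) (cond : α → β) (v1 : α → γ1) (v2 : α → γ2) :
    entropySum D cond (fun e => (v1 e, v2 e)) =
      entropySum D cond v2 + entropySum D (fun e => (cond e, v2 e)) v1 := by
  unfold entropySum
  rw [← listSum_map_add]
  apply congrArg List.sum
  apply List.map_congr_left
  intro e he
  have hB2 : D.countP (fun e' => decide ((cond e', v2 e') = (cond e, v2 e))) =
      D.countP (fun e' => decide (cond e' = cond e ∧ v2 e' = v2 e)) :=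
    List.countP_congr (fun x _ => by simp [Prod.ext_iff])
  have hB3 : D.countP (fun e' => decide ((cond e', v2 e') = (cond e, v2 e) ∧ v1 e' = v1 e)) =
      D.countP (fun e' => decide (cond e' = cond e ∧ (v1 e', v2 e') = (v1 e, v2 e))) :=
    List.countP_congr (fun x _ => by simp [Prod.ext_iff]; tauto)
  simp only [hB2, hB3]
  have hApos : 0 < D.countP (fun e' => decide (cond e' = cond e)) :=
    List.countP_pos_iff.2 ⟨e, he, by simp⟩
  have hBpos : 0 < D.countP (fun e' => decide (cond e' = cond e ∧ v2 e' = v2 e)) :=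
    List.countP_pos_iff.2 ⟨e, he, by simp⟩
  have hCpos : 0 < D.countP (fun e' => decide (cond e' = cond e ∧ (v1 e', v2 e') = (v1 e, v2 e))) :=
    List.countP_pos_iff.2 ⟨e, he, by simp⟩
  have hA : (0:ℝ) < (D.countP (fun e' => decide (cond e' = cond e)) : ℝ) :=
    Nat.cast_pos.2 hApos
  have hB : (0:ℝ) < (D.countP (fun e' => decide (cond e' = cond e ∧ v2 e' = v2 e)) : ℝ) :=
    Nat.cast_pos.2 hBpos
  have hC : (0:ℝ) <
      (D.countP (fun e' => decide (cond e' = cond e ∧ (v1 e', v2 e') = (v1 e, v2 e))) : ℝ) :=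
    Nat.cast_pos.2 hCpos
  set A := (D.countP (fun e' => decide (cond e' = cond e)) : ℝ)
  set B := (D.countP (fun e' => decide (cond e' = cond e ∧ v2 e' = v2 e)) : ℝ)
  set C := (D.countP (fun e' => decide (cond e' = cond e ∧ (v1 e', v2 e') = (v1 e, v2 e))) : ℝ)
  rw [← Real.logb_mul (by positivity) (by positivity)]
  congr 1
  field_simp

lemma listSum_map_shift {α : Type*} (l : List α) (g : α → ℝ) (c : ℝ) :
    (l.map fun e => (g e - 1) / c).sum = ((l.map g).sum - l.length) / c := by
  induction l with
  | nil => simp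
  | cons a l ih =>
    simp only [List.map_cons, List.sum_cons, ih, List.length_cons]
    push_cast
    ring

lemma logb_ratio_le {A B C E : ℝ} (hA : 0 < A) (hB : 0 < B) (hC : 0 < C) (hE : 0 < E) :
    Real.logb 2 (A / B) ≤ Real.logb 2 (C / E) + (A * E / (B * C) - 1) / Real.log 2 := by
  have hlog2 : 0 < Real.log 2 := Real.log_pos one_lt_two
  have hx : 0 < A * E / (B * C) := by positivity
  have h := Real.log_le_sub_one_of_pos hx
  have hsplit : Real.log (A * E / (B * C)) = Real.log (A / B) - Real.log (C / E) := by
    rw [Real.log_div (by positivity) (by positivity), Real.log_div (by positivity) (by positivity),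
      Real.log_div (by positivity) (by positivity), Real.log_mul (by positivity) (by positivity),
      Real.log_mul (by positivity) (by positivity)]
    ring
  have hnum : Real.log (A / B) ≤ Real.log (C / E) + (A * E / (B * C) - 1) := by
    rw [hsplit] at h; linarith
  simp only [Real.logb]
  have h2 : (Real.log (C / E) + (A * E / (B * C) - 1)) / Real.log 2
      = Real.log (C / E) / Real.log 2 + (A * E / (B * C) - 1) / Real.log 2 := by ring
  rw [← h2]
  gcongr

lemma sum_list_map_countP {ι : Type*} [DecidableEq ι] (l : List ι) (f : ι → ℝ) :
    (l.map f).sum = ∑ m ∈ l.toFinset, (l.countP (fun x => decide (x = m)) : ℝ) * f m := by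
  rw [Finset.sum_list_map_count]
  refine Finset.sum_congr rfl (fun m hm => ?_)
  rw [nsmul_eq_mul]
  rfl

lemma sum_toFinset_countP {ι : Type*} [DecidableEq ι] (l : List ι) :
    ∑ m ∈ l.toFinset, l.countP (fun x => decide (x = m)) = l.length := by
  rw [← List.sum_toFinset_count_eq_length l]
  rfl

lemma count_bound {α β1 β2 γ : Type*} [DecidableEq β1] [DecidableEq β2] [DecidableEq γ]
    (D : List α) (c2 : α → β2) (f : β2 → β1) (val : α → γ) :
    (D.map (fun e =>
      ((D.countP (fun e' => decide (c2 e' = c2 e)) : ℝ) *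
       (D.countP (fun e' => decide (f (c2 e') = f (c2 e) ∧ val e' = val e)) : ℝ)) /
      ((D.countP (fun e' => decide (c2 e' = c2 e ∧ val e' = val e)) : ℝ) *
       (D.countP (fun e' => decide (f (c2 e') = f (c2 e))) : ℝ)))).sum ≤ (D.length : ℝ) := by
  classical
  have hrw : D.map (fun e =>
      ((D.countP (fun e' => decide (c2 e' = c2 e)) : ℝ) *
       (D.countP (fun e' => decide (f (c2 e') = f (c2 e) ∧ val e' = val e)) : ℝ)) /
      ((D.countP (fun e' => decide (c2 e' = c2 e ∧ val e' = val e)) : ℝ) *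
       (D.countP (fun e' => decide (f (c2 e') = f (c2 e))) : ℝ)))
      = (D.map (fun e => (c2 e, val e))).map (fun p =>
      ((D.countP (fun e' => decide (c2 e' = p.1)) : ℝ) *
       (D.countP (fun e' => decide (f (c2 e') = f p.1 ∧ val e' = p.2)) : ℝ)) /
      ((D.countP (fun e' => decide (c2 e' = p.1 ∧ val e' = p.2)) : ℝ) *
       (D.countP (fun e' => decide (f (c2 e') = f p.1)) : ℝ))) := by
    rw [List.map_map]; rfl
  rw [hrw, sum_list_map_countP]
  have hcountb : ∀ p : β2 × γ,
      (D.map (fun e => (c2 e, val e))).countP (fun x => decide (x = p))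
      = D.countP (fun e' => decide (c2 e' = p.1 ∧ val e' = p.2)) := by
    intro p
    rw [List.countP_map]
    refine List.countP_congr (fun e _ => ?_)
    simp [Function.comp, Prod.ext_iff]
  have step1 : ∑ p ∈ (D.map (fun e => (c2 e, val e))).toFinset,
      ((D.map (fun e => (c2 e, val e))).countP (fun x => decide (x = p)) : ℝ) * (
      ((D.countP (fun e' => decide (c2 e' = p.1)) : ℝ) *
       (D.countP (fun e' => decide (f (c2 e') = f p.1 ∧ val e' = p.2)) : ℝ)) /
      ((D.countP (fun e' => decide (c2 e' = p.1 ∧ val e' = p.2)) : ℝ) *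
       (D.countP (fun e' => decide (f (c2 e') = f p.1)) : ℝ)))
      = ∑ p ∈ (D.map (fun e => (c2 e, val e))).toFinset,
      ((D.countP (fun e' => decide (c2 e' = p.1)) : ℝ) *
       (D.countP (fun e' => decide (f (c2 e') = f p.1 ∧ val e' = p.2)) : ℝ)) /
       (D.countP (fun e' => decide (f (c2 e') = f p.1)) : ℝ) := by
    refine Finset.sum_congr rfl (fun p hp => ?_)
    have hbpos : 0 < D.countP (fun e' => decide (c2 e' = p.1 ∧ val e' = p.2)) := by
      simp only [List.mem_toFinset, List.mem_map] at hp
      obtain ⟨e, he, rfl⟩ := hp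
      exact List.countP_pos_iff.2 ⟨e, he, by simp⟩
    have hb : ((D.countP (fun e' => decide (c2 e' = p.1 ∧ val e' = p.2)) : ℝ)) ≠ 0 :=
      (Nat.cast_pos.2 hbpos).ne'
    have habs : ∀ (b a e c : ℝ), b ≠ 0 → b * (a * e / (b * c)) = a * e / c := by
      intros b a e c hbne
      rw [← mul_div_assoc, mul_div_mul_left _ _ hbne]
    rw [hcountb p]
    exact habs _ _ _ _ hb
  refine le_trans (le_of_eq step1) ?_
  have hsubZW : (D.map (fun e => (c2 e, val e))).toFinset
      ⊆ (D.map c2).toFinset ×ˢ (D.map val).toFinset := by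
    intro p hp
    simp only [List.mem_toFinset, List.mem_map] at hp
    obtain ⟨e, he, rfl⟩ := hp
    simp only [Finset.mem_product, List.mem_toFinset, List.mem_map]
    exact ⟨⟨e, he, rfl⟩, ⟨e, he, rfl⟩⟩
  have hZWsum : ∑ p ∈ (D.map c2).toFinset ×ˢ (D.map val).toFinset,
      ((D.countP (fun e' => decide (c2 e' = p.1)) : ℝ) *
       (D.countP (fun e' => decide (f (c2 e') = f p.1 ∧ val e' = p.2)) : ℝ)) /
       (D.countP (fun e' => decide (f (c2 e') = f p.1)) : ℝ)
      ≤ (D.length : ℝ) := by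
    rw [Finset.sum_product]
    have hW : ∀ z : β2,
        ∑ w ∈ (D.map val).toFinset,
          D.countP (fun e' => decide (f (c2 e') = f z ∧ val e' = w))
        = D.countP (fun e' => decide (f (c2 e') = f z)) := by
      intro z
      have h1 : ∀ w, D.countP (fun e' => decide (f (c2 e') = f z ∧ val e' = w))
          = ((D.filter (fun e' => decide (f (c2 e') = f z))).map val).countP
              (fun x => decide (x = w)) := by
        intro w
        rw [List.countP_map, List.countP_filter]
        refine List.countP_congr (fun e _ => ?_)
        simp only [Function.comp_apply, Bool.and_eq_true, decide_eq_true_eq]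
        tauto
      have h2 : ((D.filter (fun e' => decide (f (c2 e') = f z))).map val).toFinset
          ⊆ (D.map val).toFinset := by
        intro w hw
        simp only [List.mem_toFinset, List.mem_map] at hw ⊢
        obtain ⟨e, he, rfl⟩ := hw
        exact ⟨e, List.mem_of_mem_filter he, rfl⟩
      calc ∑ w ∈ (D.map val).toFinset,
            D.countP (fun e' => decide (f (c2 e') = f z ∧ val e' = w))
          = ∑ w ∈ (D.map val).toFinset,
            ((D.filter (fun e' => decide (f (c2 e') = f z))).map val).countP
              (fun x => decide (x = w)) :=
            Finset.sum_congr rfl (fun w _ => h1 w)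
        _ = ∑ w ∈ ((D.filter (fun e' => decide (f (c2 e') = f z))).map val).toFinset,
            ((D.filter (fun e' => decide (f (c2 e') = f z))).map val).countP
              (fun x => decide (x = w)) :=
            (Finset.sum_subset h2 (fun w _ hw => List.countP_eq_zero.2 (fun x hx => by
              simp only [decide_eq_true_eq]
              rintro rfl
              exact hw (List.mem_toFinset.2 hx)))).symm
        _ = ((D.filter (fun e' => decide (f (c2 e') = f z))).map val).length :=
            sum_toFinset_countP _
        _ = (D.filter (fun e' => decide (f (c2 e') = f z))).length := List.length_map _
        _ = D.countP (fun e' => decide (f (c2 e') = f z)) :=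
            List.countP_eq_length_filter.symm
    have hZ : ∑ z ∈ (D.map c2).toFinset,
        D.countP (fun e' => decide (c2 e' = z)) = D.length := by
      calc ∑ z ∈ (D.map c2).toFinset, D.countP (fun e' => decide (c2 e' = z))
          = ∑ z ∈ (D.map c2).toFinset, (D.map c2).countP (fun x => decide (x = z)) :=
            Finset.sum_congr rfl (fun z _ => by rw [List.countP_map]; rfl)
        _ = (D.map c2).length := sum_toFinset_countP _
        _ = D.length := List.length_map _
    calc ∑ z ∈ (D.map c2).toFinset, ∑ w ∈ (D.map val).toFinset,
          ((D.countP (fun e' => decide (c2 e' = z)) : ℝ) *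
           (D.countP (fun e' => decide (f (c2 e') = f z ∧ val e' = w)) : ℝ)) /
           (D.countP (fun e' => decide (f (c2 e') = f z)) : ℝ)
        ≤ ∑ z ∈ (D.map c2).toFinset, (D.countP (fun e' => decide (c2 e' = z)) : ℝ) := by
          refine Finset.sum_le_sum (fun z hz => ?_)
          have hzpos : 0 < D.countP (fun e' => decide (c2 e' = z)) := by
            simp only [List.mem_toFinset, List.mem_map] at hz
            obtain ⟨e, he, rfl⟩ := hz
            exact List.countP_pos_iff.2 ⟨e, he, by simp⟩
          have hczpos : 0 < D.countP (fun e' => decide (f (c2 e') = f z)) := by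
            refine lt_of_lt_of_le hzpos (List.countP_mono_left (fun e _ h => ?_))
            simp only [decide_eq_true_eq] at h ⊢
            rw [h]
          have hcz : (0:ℝ) < (D.countP (fun e' => decide (f (c2 e') = f z)) : ℝ) :=
            Nat.cast_pos.2 hczpos
          have hWz := hW z
          calc ∑ w ∈ (D.map val).toFinset,
              ((D.countP (fun e' => decide (c2 e' = z)) : ℝ) *
               (D.countP (fun e' => decide (f (c2 e') = f z ∧ val e' = w)) : ℝ)) /
               (D.countP (fun e' => decide (f (c2 e') = f z)) : ℝ)
              = ((D.countP (fun e' => decide (c2 e' = z)) : ℝ) /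
                 (D.countP (fun e' => decide (f (c2 e') = f z)) : ℝ)) *
                ∑ w ∈ (D.map val).toFinset,
                  (D.countP (fun e' => decide (f (c2 e') = f z ∧ val e' = w)) : ℝ) := by
                rw [Finset.mul_sum]
                refine Finset.sum_congr rfl (fun w _ => ?_)
                ring
            _ = ((D.countP (fun e' => decide (c2 e' = z)) : ℝ) /
                 (D.countP (fun e' => decide (f (c2 e') = f z)) : ℝ)) *
                (D.countP (fun e' => decide (f (c2 e') = f z)) : ℝ) := by
                rw [← Nat.cast_sum, hWz]
            _ ≤ (D.countP (fun e' => decide (c2 e' = z)) : ℝ) := le_of_eq (by field_simp)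
      _ = (D.length : ℝ) := by rw [← Nat.cast_sum, hZ]
  exact le_trans (Finset.sum_le_sum_of_subset_of_nonneg hsubZW (fun p _ _ => by positivity)) hZWsum

lemma entropy_mono {α β1 β2 γ : Type*} [DecidableEq β1] [DecidableEq β2] [DecidableEq γ]
    (D : List α) (c1 : α → β1) (c2 : α → β2) (f : β2 → β1)
    (hf : c1 = fun e => f (c2 e)) (val : α → γ) :
    entropySum D c2 val ≤ entropySum D c1 val := by
  subst hf
  unfold entropySum
  show (D.map fun e => Real.logb 2
      ((D.countP (fun e' => decide (c2 e' = c2 e)) : ℝ) /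
       (D.countP (fun e' => decide (c2 e' = c2 e ∧ val e' = val e)) : ℝ))).sum
    ≤ (D.map fun e => Real.logb 2
      ((D.countP (fun e' => decide (f (c2 e') = f (c2 e))) : ℝ) /
       (D.countP (fun e' => decide (f (c2 e') = f (c2 e) ∧ val e' = val e)) : ℝ))).sum
  have key : ∀ e ∈ D,
      Real.logb 2 ((D.countP (fun e' => decide (c2 e' = c2 e)) : ℝ) /
        (D.countP (fun e' => decide (c2 e' = c2 e ∧ val e' = val e)) : ℝ))
      ≤ Real.logb 2 ((D.countP (fun e' => decide (f (c2 e') = f (c2 e))) : ℝ) /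
          (D.countP (fun e' => decide (f (c2 e') = f (c2 e) ∧ val e' = val e)) : ℝ))
        + ((((D.countP (fun e' => decide (c2 e' = c2 e)) : ℝ) *
            (D.countP (fun e' => decide (f (c2 e') = f (c2 e) ∧ val e' = val e)) : ℝ)) /
           ((D.countP (fun e' => decide (c2 e' = c2 e ∧ val e' = val e)) : ℝ) *
            (D.countP (fun e' => decide (f (c2 e') = f (c2 e))) : ℝ))) - 1) / Real.log 2 := by
    intro e he
    refine logb_ratio_le ?_ ?_ ?_ ?_ <;>
      exact Nat.cast_pos.2 (List.countP_pos_iff.2 ⟨e, he, by simp⟩)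
  refine le_trans (List.sum_le_sum key) ?_
  rw [listSum_map_add D
    (fun e => Real.logb 2 ((D.countP (fun e' => decide (f (c2 e') = f (c2 e))) : ℝ) /
      (D.countP (fun e' => decide (f (c2 e') = f (c2 e) ∧ val e' = val e)) : ℝ)))
    (fun e => ((((D.countP (fun e' => decide (c2 e' = c2 e)) : ℝ) *
            (D.countP (fun e' => decide (f (c2 e') = f (c2 e) ∧ val e' = val e)) : ℝ)) /
           ((D.countP (fun e' => decide (c2 e' = c2 e ∧ val e' = val e)) : ℝ) *
            (D.countP (fun e' => decide (f (c2 e') = f (c2 e))) : ℝ))) - 1) / Real.log 2),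
    listSum_map_shift D
    (fun e => (((D.countP (fun e' => decide (c2 e' = c2 e)) : ℝ) *
            (D.countP (fun e' => decide (f (c2 e') = f (c2 e) ∧ val e' = val e)) : ℝ)) /
           ((D.countP (fun e' => decide (c2 e' = c2 e ∧ val e' = val e)) : ℝ) *
            (D.countP (fun e' => decide (f (c2 e') = f (c2 e))) : ℝ))))
    (Real.log 2)]
  have hcb := count_bound D c2 f val
  have hlog2 : 0 < Real.log 2 := Real.log_pos one_lt_two
  have hnp : ((D.map (fun e => (((D.countP (fun e' => decide (c2 e' = c2 e)) : ℝ) *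
            (D.countP (fun e' => decide (f (c2 e') = f (c2 e) ∧ val e' = val e)) : ℝ)) /
           ((D.countP (fun e' => decide (c2 e' = c2 e ∧ val e' = val e)) : ℝ) *
            (D.countP (fun e' => decide (f (c2 e') = f (c2 e))) : ℝ))))).sum
      - (D.length : ℝ)) / Real.log 2 ≤ 0 :=
    div_nonpos_of_nonpos_of_nonneg (sub_nonpos.2 hcb) (le_of_lt hlog2)
  linarith


lemma kHist_map_fst {σ : Type} (box : σ) (k : ℕ) (h : List (σ × Bool)) :
    kLabHist box k (h.map Prod.fst) = (kHist box k h).map Prod.fst := by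
  simp [kHist, kLabHist, lastN, List.map_drop, List.map_append, List.map_replicate]

/-- For every labeled binary tree `t` and every `k ≥ 0`,
`H_k(t) ≤ H^deg(t) + H^{deg,ℓ}_k(t)`. -/
theorem Hls_le_HdegB_add_HdlB {σ : Type} [DecidableEq σ] (box : σ) (k : ℕ) (t : LBT σ) :
    Hls box k t ≤ HdegB t + HdlB box k t := by
  have hsplit : Hls box k t =
      entropySum (ldata [] t) (fun e => kHist box k e.1) (fun e => e.2.2)
      + entropySum (ldata [] t) (fun e => (kHist box k e.1, e.2.2)) (fun e => e.2.1) :=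
    entropy_chain (ldata [] t) (fun e => kHist box k e.1) (fun e => e.2.1) (fun e => e.2.2)
  have h1 : entropySum (ldata [] t) (fun e => kHist box k e.1) (fun e => e.2.2) ≤ HdegB t :=
    entropy_mono (ldata [] t) (fun _ => ()) (fun e => kHist box k e.1)
      (fun _ => ()) rfl (fun e => e.2.2)
  have h2 : entropySum (ldata [] t) (fun e => (kHist box k e.1, e.2.2)) (fun e => e.2.1)
      ≤ HdlB box k t :=
    entropy_mono (ldata [] t) (fun e => (kLabHist box k (e.1.map Prod.fst), e.2.2))
      (fun e => (kHist box k e.1, e.2.2))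
      (fun p => (p.1.map Prod.fst, p.2))
      (funext fun e => by simp [kHist_map_fst]) (fun e => e.2.1)
  rw [hsplit]
  exact add_le_add h1 h2
end
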